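/- If one of the unitary operators in the decomposition of Φ is the identity (i.e. U_{i₀} = I for some i₀), then the only eigenvalue λ of Φ with |λ| = 1 is λ = 1: if X ≠ 0 satisfies Φ(X) = λ·X with |λ| = 1, then λ = 1. -/

import Mathlib

open Matrix BigOperators

noncomputable def toE {d : ℕ} : Matrix (Fin d) (Fin d) ℂ →ₗ[ℂ] EuclideanSpace ℂ (Fin d × Fin d) where
  toFun A := WithLp.toLp 2 (fun q : Fin d × Fin d => A q.1 q.2)
  map_add' := fun _ _ => rfl
  map_smul' := fun _ _ => rfl

lemma inner_toE {d : ℕ} (A B : Matrix (Fin d) (Fin d) ℂ) :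
    (inner ℂ (toE A) (toE B) : ℂ) = Matrix.trace (Aᴴ * B) := by
  simp only [toE, LinearMap.coe_mk, AddHom.coe_mk, PiLp.inner_apply, RCLike.inner_apply,
    Matrix.trace, Matrix.diag, Matrix.mul_apply, Matrix.conjTranspose_apply,
    Fintype.sum_prod_type]
  rw [Finset.sum_comm]
  exact Finset.sum_congr rfl fun _ _ => Finset.sum_congr rfl fun _ _ => mul_comm _ _

lemma norm_toE_conj {d : ℕ} (U X : Matrix (Fin d) (Fin d) ℂ)
    (hU : U ∈ Matrix.unitaryGroup (Fin d) ℂ) :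
    ‖toE (U * X * Uᴴ)‖ = ‖toE X‖ := by
  have hUU : Uᴴ * U = 1 := by
    have := Matrix.mem_unitaryGroup_iff'.mp hU
    simpa [Matrix.star_eq_conjTranspose] using this
  have h1 : (inner ℂ (toE (U * X * Uᴴ)) (toE (U * X * Uᴴ)) : ℂ)
      = (inner ℂ (toE X) (toE X) : ℂ) := by
    rw [inner_toE, inner_toE]
    have : (U * X * Uᴴ)ᴴ * (U * X * Uᴴ) = U * (Xᴴ * X) * Uᴴ := by
      simp only [Matrix.conjTranspose_mul, Matrix.conjTranspose_conjTranspose,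
        Matrix.mul_assoc]
      rw [← Matrix.mul_assoc Uᴴ U (X * Uᴴ), hUU, Matrix.one_mul]
    rw [this, Matrix.trace_mul_cycle, ← Matrix.mul_assoc, hUU, Matrix.one_mul]
  have h2 : ‖toE (U * X * Uᴴ)‖ ^ 2 = ‖toE X‖ ^ 2 := by
    have e1 := @inner_self_eq_norm_sq ℂ _ _ _ _ (toE (U * X * Uᴴ))
    have e2 := @inner_self_eq_norm_sq ℂ _ _ _ _ (toE X)
    rw [← e1, ← e2, h1]
  exact (sq_eq_sq₀ (norm_nonneg _) (norm_nonneg _)).mp h2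

theorem stmt_14 {d m : ℕ} (hd : 1 ≤ d)
    (U : Fin m → Matrix (Fin d) (Fin d) ℂ)
    (hU : ∀ i, U i ∈ Matrix.unitaryGroup (Fin d) ℂ)
    (hid : ∃ i₀, U i₀ = 1)
    (p : Fin m → ℝ) (hp : ∀ i, 0 < p i) (hpsum : ∑ i, p i = 1)
    (Φ : Matrix (Fin d) (Fin d) ℂ → Matrix (Fin d) (Fin d) ℂ)
    (hΦ : ∀ ρ, Φ ρ = ∑ i, (p i : ℂ) • (U i * ρ * (U i)ᴴ))
    (lam : ℂ) (hlam : ‖lam‖ = 1)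
    (X : Matrix (Fin d) (Fin d) ℂ) (hX : X ≠ 0)
    (heig : Φ X = lam • X) :
    lam = 1 := by
  obtain ⟨i₀, hi₀⟩ := hid
  set v : EuclideanSpace ℂ (Fin d × Fin d) := toE X with hv
  have hv0 : v ≠ 0 := by
    intro h
    apply hX
    ext i j
    have := congrArg (fun w => w (i, j)) h
    exact this
  set N : ℝ := ‖v‖ with hN
  have hN0 : 0 < N := norm_pos_iff.mpr hv0
  have hself : (inner ℂ v v : ℂ) = (N : ℂ)^2 := by
    rw [@inner_self_eq_norm_sq_to_K ℂ]
    norm_cast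
  have key : (inner ℂ v (toE (Φ X)) : ℂ) = lam * (N : ℂ)^2 := by
    rw [heig, _root_.map_smul, inner_smul_right, hself]
  set z : Fin m → ℂ := fun i => inner ℂ v (toE (U i * X * (U i)ᴴ)) with hz
  have expand : (inner ℂ v (toE (Φ X)) : ℂ) = ∑ i, (p i : ℂ) * z i := by
    rw [hΦ, map_sum, inner_sum]
    refine Finset.sum_congr rfl fun i _ => ?_
    rw [_root_.map_smul, inner_smul_right]
  have hzle : ∀ i, ‖z i‖ ≤ N^2 := by
    intro i
    calc ‖z i‖ = ‖z i‖ := rfl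
      _ ≤ ‖v‖ * ‖toE (U i * X * (U i)ᴴ)‖ := norm_inner_le_norm _ _
      _ = N * N := by rw [norm_toE_conj _ _ (hU i), ← hv, ← hN]
      _ = N^2 := (sq N).symm
  have hzi₀ : z i₀ = (N : ℂ)^2 := by
    rw [hz]
    simp only [hi₀, Matrix.conjTranspose_one, Matrix.one_mul, Matrix.mul_one]
    exact hself
  set a : Fin m → ℝ := fun i => (starRingEnd ℂ lam * z i).re with ha
  have hale : ∀ i, a i ≤ N^2 := fun i => by
    calc a i ≤ ‖starRingEnd ℂ lam * z i‖ := Complex.re_le_norm _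
      _ = ‖z i‖ := by
          rw [norm_mul, Complex.norm_conj, hlam, one_mul]
      _ ≤ N^2 := hzle i
  have hconj : starRingEnd ℂ lam * lam = 1 := by
    have h1 : starRingEnd ℂ lam * lam = (Complex.normSq lam : ℂ) := by
      rw [mul_comm, Complex.mul_conj]
    rw [h1, Complex.normSq_eq_norm_sq, hlam]
    norm_num
  have hasum : ∑ i, p i * a i = N^2 := by
    have h1 : (starRingEnd ℂ lam) * ∑ i, (p i : ℂ) * z i = (N : ℂ)^2 := by
      rw [← expand, key, ← mul_assoc, hconj, one_mul]
    have h2 : ∑ i, p i * a i = ((starRingEnd ℂ lam) * ∑ i, (p i : ℂ) * z i).re := by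
      rw [Finset.mul_sum, Complex.re_sum]
      refine Finset.sum_congr rfl fun i _ => ?_
      rw [show starRingEnd ℂ lam * ((p i : ℂ) * z i)
          = (p i : ℂ) * (starRingEnd ℂ lam * z i) from by ring, Complex.re_ofReal_mul]
    rw [h2, h1, ← Complex.ofReal_pow, Complex.ofReal_re]
  have hai₀ : a i₀ = N^2 := by
    by_contra hne
    have hlt : a i₀ < N^2 := lt_of_le_of_ne (hale i₀) hne
    have hstrict : ∑ i, p i * a i < ∑ i, p i * N^2 :=
      Finset.sum_lt_sum
        (fun i _ => mul_le_mul_of_nonneg_left (hale i) (hp i).le)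
        ⟨i₀, Finset.mem_univ _, mul_lt_mul_of_pos_left hlt (hp i₀)⟩
    rw [hasum, ← Finset.sum_mul, hpsum, one_mul] at hstrict
    exact lt_irrefl _ hstrict
  have hre : lam.re = 1 := by
    have h1 : a i₀ = lam.re * N^2 := by
      have hc : ((N:ℂ))^2 = ((N^2 : ℝ) : ℂ) := by push_cast; ring
      rw [ha]
      simp only [hzi₀, hc]
      simp [Complex.mul_re, ← Complex.ofReal_pow]
    rw [h1] at hai₀
    have hN2 : (0:ℝ) < N^2 := by positivity
    nlinarith
  have him : lam.im = 0 := by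
    have h1 : Complex.normSq lam = 1 := by
      rw [← Complex.sq_norm lam, hlam]; norm_num
    rw [Complex.normSq_apply, hre] at h1
    nlinarith
  exact Complex.ext hre him
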